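/- (Weak duality between problem (3) and its dual (8).) Let J : ℝᵖ → ℝ^{m×n} be a linear map with adjoint J* (with respect to the Frobenius inner product), b ∈ ℝ^{m×n}, λ > 0. Suppose (X, τ, E) ∈ ℝ^{m×n} × ℝᵖ × ℝ^{m×n} satisfies b + Jτ = X + E, and Y ∈ ℝ^{m×n} satisfies J*Y = 0, ‖Y‖ ≤ 1 and ‖Y‖_∞ ≤ λ. Then ⟨Y, b⟩ ≤ ‖X‖_* + λ‖E‖₁. -/

import Mathlib

open scoped Matrix

noncomputable section

/-- Frobenius inner product on real matrices. -/
def finner {m n : ℕ} (A B : Matrix (Fin m) (Fin n) ℝ) : ℝ := ∑ i, ∑ j, A i j * B i j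

/-- Frobenius norm. -/
noncomputable def frobNorm {m n : ℕ} (A : Matrix (Fin m) (Fin n) ℝ) : ℝ := Real.sqrt (finner A A)

/-- Entrywise ℓ1 norm of a matrix. -/
def l1Norm {m n : ℕ} (A : Matrix (Fin m) (Fin n) ℝ) : ℝ := ∑ i, ∑ j, |A i j|

open scoped ComplexOrder in
/-- `Matrix.PosSemidef.sqrt` as it stood in Mathlib (Dec 2024); removed since. -/
noncomputable def Matrix.PosSemidef.sqrt {n 𝕜 : Type*} [Fintype n] [RCLike 𝕜] [DecidableEq n]
    {A : Matrix n n 𝕜} (hA : A.PosSemidef) : Matrix n n 𝕜 :=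
  hA.1.eigenvectorUnitary.1 * Matrix.diagonal ((↑) ∘ (√·) ∘ hA.1.eigenvalues) *
  (star hA.1.eigenvectorUnitary : Matrix n n 𝕜)

/-- Nuclear norm: trace of the PSD square root of XᵀX. -/
noncomputable def nuclearNorm {m n : ℕ} (X : Matrix (Fin m) (Fin n) ℝ) : ℝ :=
  (Matrix.posSemidef_conjTranspose_mul_self X).sqrt.trace

/-- Entrywise soft-thresholding operator. -/
noncomputable def softThresh {m n : ℕ} (μ : ℝ) (X : Matrix (Fin m) (Fin n) ℝ) :
    Matrix (Fin m) (Fin n) ℝ :=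
  Matrix.of fun i j => Real.sign (X i j) * max (|X i j| - μ) 0

/-- Spectral norm: the ℓ²→ℓ² operator norm. -/
noncomputable def matSpectralNorm {m n : ℕ} (Y : Matrix (Fin m) (Fin n) ℝ) : ℝ :=
  ‖LinearMap.toContinuousLinearMap (Matrix.toEuclideanLin Y)‖

/-- Cauchy–Schwarz for real sums. -/
lemma cs_sum {ι : Type*} [Fintype ι] (a b : ι → ℝ) :
    ∑ i, a i * b i ≤ Real.sqrt (∑ i, a i ^ 2) * Real.sqrt (∑ i, b i ^ 2) := by
  have h := Finset.sum_mul_sq_le_sq_mul_sq Finset.univ a b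
  calc ∑ i, a i * b i ≤ |∑ i, a i * b i| := le_abs_self _
    _ = Real.sqrt ((∑ i, a i * b i) ^ 2) := (Real.sqrt_sq_eq_abs _).symm
    _ ≤ Real.sqrt ((∑ i, a i ^ 2) * ∑ i, b i ^ 2) := Real.sqrt_le_sqrt h
    _ = _ := Real.sqrt_mul (Finset.sum_nonneg fun i _ => sq_nonneg _) _

/-- The spectral norm bounds the Euclidean norm of `Y *ᵥ v`. -/
lemma mulVec_norm_le {m n : ℕ} (Y : Matrix (Fin m) (Fin n) ℝ) (v : Fin n → ℝ) :
    Real.sqrt (∑ i, (Y *ᵥ v) i ^ 2) ≤ matSpectralNorm Y * Real.sqrt (∑ j, v j ^ 2) := by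
  set ve : EuclideanSpace ℝ (Fin n) := (WithLp.equiv 2 (Fin n → ℝ)).symm v with hve
  have h := (LinearMap.toContinuousLinearMap (Matrix.toEuclideanLin Y)).le_opNorm ve
  have h1 : ‖LinearMap.toContinuousLinearMap (Matrix.toEuclideanLin Y) ve‖
      = Real.sqrt (∑ i, (Y *ᵥ v) i ^ 2) := by
    rw [LinearMap.coe_toContinuousLinearMap']
    rw [EuclideanSpace.norm_eq]
    congr 1
    refine Finset.sum_congr rfl fun i _ => ?_
    rw [Real.norm_eq_abs, sq_abs]
    congr 1
  have h2 : ‖ve‖ = Real.sqrt (∑ j, v j ^ 2) := by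
    rw [EuclideanSpace.norm_eq]
    congr 1
    exact Finset.sum_congr rfl fun j _ => by rw [Real.norm_eq_abs, sq_abs]; rfl
  rw [h1, h2] at h
  exact h

/-- Sum-of-squares of `X *ᵥ w` via the Gram matrix. -/
lemma sq_mulVec_eq {m n : ℕ} (X : Matrix (Fin m) (Fin n) ℝ) (w : Fin n → ℝ) :
    ∑ i, (X *ᵥ w) i ^ 2 = ∑ j, w j * ((Xᴴ * X) *ᵥ w) j := by
  simp only [Matrix.mulVec, dotProduct, Matrix.mul_apply, Matrix.conjTranspose_apply,
    star_trivial, pow_two, Finset.sum_mul, Finset.mul_sum]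
  rw [Finset.sum_comm]
  refine Finset.sum_congr rfl fun j _ => ?_
  rw [Finset.sum_comm]
  refine Finset.sum_congr rfl fun l _ => ?_
  exact Finset.sum_congr rfl fun i _ => by ring

/-- Weak duality between problem (3) and its dual (8). If `(X, τ, E)` is
primal feasible and `Y` is dual feasible (`J*Y = 0`, `‖Y‖ ≤ 1`, `‖Y‖_∞ ≤ λ`), then
`⟨Y, b⟩ ≤ ‖X‖_* + λ‖E‖₁`. -/
theorem TILT_weak_duality {m n p : ℕ}
    (J : (Fin p → ℝ) →ₗ[ℝ] Matrix (Fin m) (Fin n) ℝ)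
    (Jadj : Matrix (Fin m) (Fin n) ℝ →ₗ[ℝ] (Fin p → ℝ))
    (hadj : ∀ (v : Fin p → ℝ) (A : Matrix (Fin m) (Fin n) ℝ),
      finner (J v) A = ∑ i, v i * Jadj A i)
    (b X E Y : Matrix (Fin m) (Fin n) ℝ) (τ : Fin p → ℝ) (lam : ℝ) (hlam : 0 < lam)
    (hfeas : b + J τ = X + E)
    (hdual₁ : Jadj Y = 0)
    (hdual₂ : matSpectralNorm Y ≤ 1)
    (hdual₃ : ∀ i j, |Y i j| ≤ lam) :
    finner Y b ≤ nuclearNorm X + lam * l1Norm E := by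
  classical
  set hM := Matrix.posSemidef_conjTranspose_mul_self X with hMdef
  set hH := hM.1
  set V : Matrix (Fin n) (Fin n) ℝ := (hH.eigenvectorUnitary : Matrix (Fin n) (Fin n) ℝ) with hVdef
  set ev : Fin n → ℝ := hH.eigenvalues with hevdef
  set v : Fin n → Fin n → ℝ := fun k => hH.eigenvectorBasis k with hvdef
  have hVapp : ∀ j k, V j k = v k j := fun j k => rfl
  -- unitarity
  have hU : V * star V = 1 := Matrix.mem_unitaryGroup_iff.mp hH.eigenvectorUnitary.2
  have hU' : star V * V = 1 := Matrix.mem_unitaryGroup_iff'.mp hH.eigenvectorUnitary.2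
  have hrow : ∀ j l, ∑ k, v k j * v k l = if j = l then 1 else 0 := by
    intro j l
    have := congrFun (congrFun hU j) l
    simpa [Matrix.mul_apply, Matrix.star_eq_conjTranspose, Matrix.conjTranspose_apply,
      Matrix.one_apply, hVapp] using this
  have hcol : ∀ k, ∑ j, v k j ^ 2 = 1 := by
    intro k
    have := congrFun (congrFun hU' k) k
    simpa [Matrix.mul_apply, Matrix.star_eq_conjTranspose, Matrix.conjTranspose_apply,
      Matrix.one_apply, hVapp, pow_two] using this
  -- nuclear norm value
  have hnuc : nuclearNorm X = ∑ k, Real.sqrt (ev k) := by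
    show (hM.sqrt).trace = _
    rw [Matrix.PosSemidef.sqrt, Matrix.trace_mul_comm, ← Matrix.mul_assoc]
    rw [show (star hH.eigenvectorUnitary : Matrix (Fin n) (Fin n) ℝ) *
        hH.eigenvectorUnitary.1 = 1 from hU', Matrix.one_mul, Matrix.trace_diagonal]
    rfl
  -- eigenvalue nonnegativity
  have hevnn : ∀ k, 0 ≤ ev k := fun k => hM.eigenvalues_nonneg k
  -- norm of X *ᵥ v k
  have hXv : ∀ k, ∑ i, (X *ᵥ v k) i ^ 2 = ev k := by
    intro k
    rw [sq_mulVec_eq]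
    have hMv : (Xᴴ * X) *ᵥ v k = ev k • v k := by
      have := hH.mulVec_eigenvectorBasis k; exact this
    rw [hMv]
    simp only [Pi.smul_apply, smul_eq_mul]
    rw [show ∑ j, v k j * (ev k * v k j) = ev k * ∑ j, v k j ^ 2 by
      rw [Finset.mul_sum]; exact Finset.sum_congr rfl fun j _ => by ring]
    rw [hcol k, mul_one]
  -- trace identity
  have htrace : finner Y X = ∑ k, ∑ i, (Y *ᵥ v k) i * (X *ᵥ v k) i := by
    symm
    calc ∑ k, ∑ i, (Y *ᵥ v k) i * (X *ᵥ v k) i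
        = ∑ k, ∑ i, ∑ j, ∑ l, Y i j * X i l * (v k j * v k l) := by
          refine Finset.sum_congr rfl fun k _ => Finset.sum_congr rfl fun i _ => ?_
          simp only [Matrix.mulVec, dotProduct, Finset.sum_mul_sum]
          exact Finset.sum_congr rfl fun j _ => Finset.sum_congr rfl fun l _ => by ring
      _ = ∑ i, ∑ j, ∑ l, Y i j * X i l * ∑ k, v k j * v k l := by
          rw [Finset.sum_comm]
          refine Finset.sum_congr rfl fun i _ => ?_
          rw [Finset.sum_comm]
          refine Finset.sum_congr rfl fun j _ => ?_
          rw [Finset.sum_comm]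
          exact Finset.sum_congr rfl fun l _ => (Finset.mul_sum _ _ _).symm
      _ = ∑ i, ∑ j, Y i j * X i j := by
          refine Finset.sum_congr rfl fun i _ => Finset.sum_congr rfl fun j _ => ?_
          simp [hrow, mul_ite]
      _ = finner Y X := rfl
  -- bound finner Y X
  have hYX : finner Y X ≤ nuclearNorm X := by
    rw [htrace, hnuc]
    refine Finset.sum_le_sum fun k _ => ?_
    have hcs := cs_sum (Y *ᵥ v k) (X *ᵥ v k)
    have hY : Real.sqrt (∑ i, (Y *ᵥ v k) i ^ 2) ≤ 1 := by
      have := mulVec_norm_le Y (v k)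
      rw [hcol k, Real.sqrt_one, mul_one] at this
      exact this.trans hdual₂
    calc ∑ i, (Y *ᵥ v k) i * (X *ᵥ v k) i
        ≤ Real.sqrt (∑ i, (Y *ᵥ v k) i ^ 2) * Real.sqrt (∑ i, (X *ᵥ v k) i ^ 2) := hcs
      _ ≤ 1 * Real.sqrt (∑ i, (X *ᵥ v k) i ^ 2) :=
          mul_le_mul_of_nonneg_right hY (Real.sqrt_nonneg _)
      _ = Real.sqrt (ev k) := by rw [one_mul, hXv k]
  -- bound finner Y E
  have hYE : finner Y E ≤ lam * l1Norm E := by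
    rw [l1Norm, Finset.mul_sum]
    refine Finset.sum_le_sum fun i _ => ?_
    rw [Finset.mul_sum]
    refine Finset.sum_le_sum fun j _ => ?_
    calc Y i j * E i j ≤ |Y i j * E i j| := le_abs_self _
      _ = |Y i j| * |E i j| := abs_mul _ _
      _ ≤ lam * |E i j| := mul_le_mul_of_nonneg_right (hdual₃ i j) (abs_nonneg _)
  -- orthogonality to J τ
  have hJ : finner Y (J τ) = 0 := by
    have hsymm : finner Y (J τ) = finner (J τ) Y := by
      simp [finner, mul_comm]
    rw [hsymm, hadj, hdual₁]
    simp
  -- decompose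
  have hb : b = X + E - J τ := eq_sub_of_add_eq hfeas
  have hdec : finner Y b = finner Y X + finner Y E - finner Y (J τ) := by
    rw [hb]
    simp only [finner, Matrix.sub_apply, Matrix.add_apply, mul_sub, mul_add,
      Finset.sum_sub_distrib, Finset.sum_add_distrib]
  rw [hdec, hJ, sub_zero]
  exact add_le_add hYX hYE
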